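/- Let α₁, α₂ ∈ (0,1) satisfy α₁² + α₂² = 1 and let C ≥ 1 be a real number satisfying C + (α₂/(1−α₂))·√(C² − 1) = α₁/(1−α₂). Then C ≤ 2/√3. -/
import Mathlib

lemma key_poly (u x : ℝ) (hu0 : 0 < u) (hu1 : u < 1) (hx : 1 ≤ x)
    (hQ : x * u ≤ 2 - u) (hR : 0 ≤ 1 + x * (2 * u - 1))
    (hP : (1 + x * (2 * u - 1)) ^ 2 = 4 * x * u ^ 3 * (2 - u)) :
    3 * x ≤ 4 := by
  by_contra h
  push_neg at h
  rcases le_or_gt u (1/2) with hc | hc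
  · have hm : 0 ≤ 1 - 2*u := by linarith
    have hu8 : 1/8 ≤ u := by nlinarith
    nlinarith [mul_nonneg hR (mul_nonneg (by linarith : (0:ℝ) ≤ 3*x-4) hm),
      mul_nonneg (mul_nonneg (by linarith : (0:ℝ) ≤ 3*x-4) hm) hm,
      mul_nonneg (mul_nonneg (by linarith : (0:ℝ) ≤ u - 1/8) (by linarith : (0:ℝ) ≤ 1/2 - u)) (sq_nonneg (1-2*u)),
      mul_pos (mul_pos (by linarith : (0:ℝ) < 3*x-4) (pow_pos hu0 3)) (by linarith : (0:ℝ) < 2 - u)]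
  · have hx43 : (0:ℝ) < x - 4/3 := by linarith
    have hu67 : u < 6/7 := by nlinarith
    have hS : (0:ℝ) ≤ 2 - u - x*u := by linarith
    have hD : (0:ℝ) < 2 - 7/3*u := by linarith
    have h12 : (0:ℝ) < -(12*u^2 - 12*u + 1) := by
      nlinarith [mul_pos (by linarith : (0:ℝ) < u - 1/2) (by linarith : (0:ℝ) < 6/7 - u)]
    have hcub : (0:ℝ) < -(u^3 - u^2 - 3*u + 1) := by
      nlinarith [mul_nonneg (sq_nonneg u) (by linarith : (0:ℝ) ≤ 1 - u)]
    have t1 : 0 ≤ (2 - u - x*u) * u^2 * (2*u-1)^2 * (-(12*u^2 - 12*u + 1)) / 9 := by positivity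
    have t2 : 0 < u * (x - 4/3) * 4 * (1-u)^3 * (-(u^3 - u^2 - 3*u + 1)) := by
      have h1u : (0:ℝ) < (1-u)^3 := pow_pos (by linarith) 3
      have := mul_pos (mul_pos (mul_pos (mul_pos hu0 hx43) (by norm_num : (0:ℝ) < 4)) h1u) hcub
      linarith [this]
    have t3 : 0 ≤ u * (2*u-1)^2 * (x - 4/3) * (2 - u - x*u) * (2 - 7/3*u) := by
      have h1 : (0:ℝ) ≤ (2*u-1)^2 := sq_nonneg _
      have := mul_nonneg (mul_nonneg (mul_nonneg (mul_nonneg hu0.le h1) hx43.le) hS) hD.le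
      linarith [this]
    have hid : u^2 * (2 - 7/3*u) * ((1 + x * (2 * u - 1)) ^ 2 - 4 * x * u ^ 3 * (2 - u))
        = -((2 - u - x*u) * u^2 * (2*u-1)^2 * (-(12*u^2 - 12*u + 1)) / 9)
          - (u * (x - 4/3) * 4 * (1-u)^3 * (-(u^3 - u^2 - 3*u + 1)))
          - (u * (2*u-1)^2 * (x - 4/3) * (2 - u - x*u) * (2 - 7/3*u)) := by ring
    rw [hP, sub_self] at hid
    linarith [t1, t2, t3]

/-- If `α₁, α₂ ∈ (0,1)` with `α₁² + α₂² = 1` and `C ≥ 1` satisfies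
`C + (α₂/(1−α₂))·√(C² − 1) = α₁/(1−α₂)`, then `C ≤ 2/√3`. -/
theorem upper_bound_algebra (α₁ α₂ C : ℝ)
    (h1 : α₁ ∈ Set.Ioo (0 : ℝ) 1) (h2 : α₂ ∈ Set.Ioo (0 : ℝ) 1)
    (hsum : α₁ ^ 2 + α₂ ^ 2 = 1) (hC : 1 ≤ C)
    (heq : C + α₂ / (1 - α₂) * Real.sqrt (C ^ 2 - 1) = α₁ / (1 - α₂)) :
    C ≤ 2 / Real.sqrt 3 := by
  obtain ⟨ha0, ha1⟩ := h1
  obtain ⟨ht0, ht1⟩ := h2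
  set s := Real.sqrt (C ^ 2 - 1) with hs
  have hs0 : 0 ≤ s := Real.sqrt_nonneg _
  have hs2 : s ^ 2 = C ^ 2 - 1 := Real.sq_sqrt (by nlinarith)
  have hu : (0:ℝ) < 1 - α₂ := by linarith
  have heq' : C * (1 - α₂) + α₂ * s = α₁ := by
    field_simp at heq
    linarith [heq]
  -- derive the squared equation
  have h1' : α₂ * s = α₁ - C * (1 - α₂) := by linarith
  have h2' : α₂^2 * (C^2 - 1) = (α₁ - C * (1 - α₂))^2 := by
    rw [← hs2]
    linear_combination (α₂ * s + (α₁ - C * (1 - α₂))) * h1'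
  have hE : 2 * α₁ * C * (1 - α₂) = 1 + C^2 * (2 * (1 - α₂) - 1) := by
    linear_combination h2' + hsum
  have hR : 0 ≤ 1 + C^2 * (2 * (1 - α₂) - 1) := by
    rw [← hE]
    have : (0:ℝ) < α₁ * C := mul_pos ha0 (by linarith)
    nlinarith [mul_pos this hu]
  have hQle : 0 ≤ α₁ - C * (1 - α₂) := by
    rw [← h1']
    exact mul_nonneg ht0.le hs0
  have hQ : C^2 * (1 - α₂) ≤ 2 - (1 - α₂) := by
    have hsq : (C * (1 - α₂))^2 ≤ α₁^2 := by
      nlinarith [mul_nonneg hQle (mul_nonneg (by linarith : (0:ℝ) ≤ C) hu.le)]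
    have ha2 : α₁^2 = (1 - α₂) * (1 + α₂) := by linear_combination hsum
    nlinarith [hsq, hu]
  have hP : (1 + C^2 * (2 * (1 - α₂) - 1))^2 = 4 * C^2 * (1 - α₂)^3 * (2 - (1 - α₂)) := by
    have ha2 : α₁^2 = (1 - α₂) * (1 + α₂) := by linear_combination hsum
    linear_combination (-(1 + C^2 * (2 * (1 - α₂) - 1)) - 2*α₁*C*(1-α₂)) * hE
      + 4*C^2*(1-α₂)^2 * ha2
  have hkey : 3 * C^2 ≤ 4 :=
    key_poly (1 - α₂) (C^2) hu (by linarith) (by nlinarith) hQ hR hP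
  have h3 : Real.sqrt 3 ^ 2 = 3 := Real.sq_sqrt (by norm_num)
  have hm : (0:ℝ) < 2 / Real.sqrt 3 := by positivity
  have hC2 : C^2 ≤ (2 / Real.sqrt 3)^2 := by
    rw [div_pow, h3]; linarith
  calc C = Real.sqrt (C^2) := (Real.sqrt_sq (by linarith)).symm
    _ ≤ Real.sqrt ((2 / Real.sqrt 3)^2) := Real.sqrt_le_sqrt hC2
    _ = 2 / Real.sqrt 3 := Real.sqrt_sq hm.le
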